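/- arXiv:2405.00387 — 2 statements merged into one kernel-verified Lean document; each statement's English description precedes it below -/
import Mathlib

section
/- Suppose β* : Fin n → Bool is the unique minimizer of P_N(ρ, ·), with gap δ > 0, i.e., P_N(ρ, β) ≥ P_N(ρ, β*) + δ for every β ≠ β*. If ε ≥ 0, ξ ≥ 0, P_max ≥ 0 and ε * ξ * P_max * n < δ, then β* is also a minimizer of the erroneous cost P_N(fun k => ρ k + ε, ·); i.e., sufficiently small estimation errors cannot change the optimal switching policy. -/
/-- Network power consumption: `P_N(ρ, β) = P_H + ∑ k, (if β k then P_C + ξ * ρ k * P_max else P_S)`. -/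
noncomputable def PN {n : ℕ} (P_H P_C P_S ξ P_max : ℝ) (ρ : Fin n → ℝ) (β : Fin n → Bool) : ℝ :=
  P_H + ∑ k, (if β k then P_C + ξ * ρ k * P_max else P_S)

/-- Sufficiently small estimation errors cannot change the optimal switching policy:
if `β*` is the unique minimizer with gap `δ` and `ε * ξ * P_max * n < δ`, then `β*`
also minimizes the erroneous cost. -/
theorem small_error_preserves_minimizer {n : ℕ} (P_H P_C P_S ξ P_max : ℝ)
    (ρ : Fin n → ℝ) (βstar : Fin n → Bool) (δ ε : ℝ) (hδ : 0 < δ)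
    (hgap : ∀ β : Fin n → Bool, β ≠ βstar →
      PN P_H P_C P_S ξ P_max ρ β ≥ PN P_H P_C P_S ξ P_max ρ βstar + δ)
    (hε : 0 ≤ ε) (hξ : 0 ≤ ξ) (hPmax : 0 ≤ P_max)
    (hsmall : ε * ξ * P_max * (n : ℝ) < δ) :
    ∀ β : Fin n → Bool,
      PN P_H P_C P_S ξ P_max (fun k => ρ k + ε) βstar
        ≤ PN P_H P_C P_S ξ P_max (fun k => ρ k + ε) β := by
  intro β
  set c : ℝ := ξ * ε * P_max with hc
  have hc0 : 0 ≤ c := by positivity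
  have key : ∀ γ : Fin n → Bool,
      PN P_H P_C P_S ξ P_max (fun k => ρ k + ε) γ
        = PN P_H P_C P_S ξ P_max ρ γ + ∑ k, (if γ k then c else 0) := by
    intro γ
    simp only [PN, add_assoc, ← Finset.sum_add_distrib]
    congr 1
    apply Finset.sum_congr rfl
    intro k _
    by_cases h : γ k <;> simp [h, hc] <;> ring
  have hbound : ∀ γ : Fin n → Bool,
      0 ≤ (∑ k, (if γ k then c else 0)) ∧ (∑ k, (if γ k then c else 0)) ≤ n * c := by
    intro γ
    constructor
    · exact Finset.sum_nonneg fun k _ => by split <;> simp [hc0]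
    · calc (∑ k : Fin n, (if γ k then c else 0)) ≤ ∑ _k : Fin n, c :=
            Finset.sum_le_sum fun k _ => by split <;> simp [hc0]
        _ = n * c := by simp [Finset.sum_const, mul_comm]
  rw [key β, key βstar]
  by_cases hβ : β = βstar
  · subst hβ; rfl
  · have hg := hgap β hβ
    have h1 := (hbound βstar).2
    have h2 := (hbound β).1
    have : (n : ℝ) * c < δ := by
      have : ε * ξ * P_max * (n : ℝ) = (n : ℝ) * c := by rw [hc]; ring
      linarith [hsmall, this.symm.le, this.le]
    linarith
end

section
/- For ε ≥ 0, ξ ≥ 0, P_max ≥ 0, the minimum over all policies of the erroneous cost is bounded by the minimum of the error-free cost plus the maximal perturbation: (min over β of P_N(ρ, β)) ≤ (min over β of P_N(fun k => ρ k + ε, β)) ≤ (min over β of P_N(ρ, β)) + ε * ξ * P_max * n; i.e., the estimation error degrades the achievable energy consumption by at most ε·ξ·P_max·n. -/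
/-- The estimation error degrades the achievable (minimal) energy consumption by at
most `ε * ξ * P_max * n`. -/
theorem min_power_error_bounds {n : ℕ} (P_H P_C P_S ξ P_max : ℝ)
    (ρ : Fin n → ℝ) (ε : ℝ) (hε : 0 ≤ ε) (hξ : 0 ≤ ξ) (hPmax : 0 ≤ P_max) :
    (⨅ β : Fin n → Bool, PN P_H P_C P_S ξ P_max ρ β)
        ≤ (⨅ β : Fin n → Bool, PN P_H P_C P_S ξ P_max (fun k => ρ k + ε) β)
    ∧ (⨅ β : Fin n → Bool, PN P_H P_C P_S ξ P_max (fun k => ρ k + ε) β)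
        ≤ (⨅ β : Fin n → Bool, PN P_H P_C P_S ξ P_max ρ β) + ε * ξ * P_max * (n : ℝ) := by
  have hbdd1 : BddBelow (Set.range fun β : Fin n → Bool => PN P_H P_C P_S ξ P_max ρ β) :=
    Set.Finite.bddBelow (Set.finite_range _)
  have hbdd2 : BddBelow (Set.range fun β : Fin n → Bool =>
      PN P_H P_C P_S ξ P_max (fun k => ρ k + ε) β) :=
    Set.Finite.bddBelow (Set.finite_range _)
  have h1 : ∀ β : Fin n → Bool,
      PN P_H P_C P_S ξ P_max ρ β ≤ PN P_H P_C P_S ξ P_max (fun k => ρ k + ε) β := by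
    intro β
    unfold PN
    gcongr with k _
    by_cases h : β k <;> simp [h]
    · nlinarith [mul_nonneg (mul_nonneg hξ hε) hPmax]
  have h2 : ∀ β : Fin n → Bool,
      PN P_H P_C P_S ξ P_max (fun k => ρ k + ε) β
        ≤ PN P_H P_C P_S ξ P_max ρ β + ε * ξ * P_max * (n : ℝ) := by
    intro β
    unfold PN
    have : ε * ξ * P_max * (n : ℝ) = ∑ _k : Fin n, ε * ξ * P_max := by
      simp [mul_comm]
    rw [this, add_assoc, ← Finset.sum_add_distrib]
    gcongr with k _
    by_cases h : β k <;> simp [h]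
    · nlinarith [mul_nonneg (mul_nonneg hξ hε) hPmax]
    · positivity
  constructor
  · exact le_ciInf fun β => (ciInf_le hbdd1 β).trans (h1 β)
  · rw [← sub_le_iff_le_add]
    exact le_ciInf fun β => sub_le_iff_le_add.mpr ((ciInf_le hbdd2 β).trans (h2 β))
end
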